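/- Asymptotics of Ψ along the line √2 t. Let g : [0,∞) → [0,∞) be measurable with C_r := √(2/π) ∫_0^∞ g(y) y e^{√2 y} dy < ∞. Fix r > 0 and x ∈ ℝ. Then lim_{t→∞} (t^{3/2} / ((3/(2√2)) log t)) · Ψ_g(r,t, √2 t + x) = C_r e^{−√2 x}. -/

import Mathlib

open MeasureTheory Set Filter Topology

/-- The centering term m(t) = √2 t − (3/(2√2)) log t. -/
noncomputable def mFun (t : ℝ) : ℝ :=
  Real.sqrt 2 * t - 3 / (2 * Real.sqrt 2) * Real.log t

/-- The quantity Ψ_g(r,t,x) built from a measurable g : [0,∞) → [0,∞). -/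
noncomputable def PsiG (g : ℝ → ℝ) (r t x : ℝ) : ℝ :=
  Real.exp (-(Real.sqrt 2 * (x - Real.sqrt 2 * t))) / Real.sqrt (2 * Real.pi * (t - r)) *
    ∫ y in Ioi (0 : ℝ),
      g y * Real.exp (Real.sqrt 2 * y) *
        Real.exp (-(x - Real.sqrt 2 * t - y) ^ 2 / (2 * (t - r))) *
        (1 - Real.exp (-(2 * (x - mFun t) * y) / (t - r)))

lemma auxSlope : Tendsto (fun u : ℝ => (1 - Real.exp (-u)) / u) (𝓝[≠] (0:ℝ)) (𝓝 1) := by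
  have hd : HasDerivAt (fun u : ℝ => 1 - Real.exp (-u)) 1 0 := by
    have h1 : HasDerivAt (fun u : ℝ => Real.exp (-u)) (-1) 0 := by
      simpa using (hasDerivAt_neg (0:ℝ)).exp
    exact ((hasDerivAt_const (0:ℝ) (1:ℝ)).sub h1).congr_deriv (by norm_num)
  have h := hasDerivAt_iff_tendsto_slope.mp hd
  refine h.congr fun u => ?_
  rw [slope_def_field]
  simp

lemma sqrtTwoDivPi : Real.sqrt (2/Real.pi) = 2 / Real.sqrt (2*Real.pi) := by
  rw [show (2:ℝ)/Real.pi = 4/(2*Real.pi) by field_simp; ring,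
    Real.sqrt_div (by norm_num : (0:ℝ) ≤ 4),
    show Real.sqrt 4 = 2 by rw [show (4:ℝ) = 2^2 by norm_num, Real.sqrt_sq (by norm_num)]]

set_option maxHeartbeats 1000000 in
/-- Asymptotics of Ψ along the line √2 t:
lim_{t→∞} (t^{3/2} / ((3/(2√2)) log t)) Ψ_g(r,t,√2 t + x) = C_r e^{−√2 x},
where C_r = √(2/π) ∫₀^∞ g(y) y e^{√2 y} dy < ∞. -/
theorem psiG_asymptotics_line
    (g : ℝ → ℝ) (hmeas : Measurable g) (hpos : ∀ y : ℝ, 0 ≤ y → 0 ≤ g y)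
    (hint : IntegrableOn (fun y => g y * (y * Real.exp (Real.sqrt 2 * y))) (Ioi 0))
    (r : ℝ) (hr : 0 < r) (x : ℝ) :
    Tendsto (fun t : ℝ => t ^ ((3 : ℝ) / 2) / (3 / (2 * Real.sqrt 2) * Real.log t) *
        PsiG g r t (Real.sqrt 2 * t + x)) atTop
      (𝓝 (Real.sqrt (2 / Real.pi) *
          (∫ y in Ioi (0 : ℝ), g y * (y * Real.exp (Real.sqrt 2 * y))) *
        Real.exp (-(Real.sqrt 2 * x)))) := by
  have h2 : (0:ℝ) < Real.sqrt 2 := Real.sqrt_pos.mpr (by norm_num)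
  have hπ : (0:ℝ) < Real.pi := Real.pi_pos
  set c : ℝ := 3 / (2 * Real.sqrt 2) with hc_def
  have hc : 0 < c := by positivity
  set K : ℝ → ℝ := fun t => t ^ ((3:ℝ)/2) / (c * Real.log t) / Real.sqrt (2 * Real.pi * (t - r))
    with hK_def
  set a : ℝ → ℝ := fun t => 2 * (x + c * Real.log t) / (t - r) with ha_def
  set φ : ℝ → ℝ → ℝ := fun t y => K t *
    (g y * Real.exp (Real.sqrt 2 * y) * Real.exp (-(x - y)^2 / (2*(t - r))) *
      (1 - Real.exp (-(a t * y)))) with hφ_def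
  -- basic tendsto facts
  have htr : Tendsto (fun t : ℝ => t - r) atTop atTop := by
    simpa [sub_eq_add_neg] using tendsto_atTop_add_const_right atTop (-r) tendsto_id
  have hP : Tendsto (fun t : ℝ => t / (t - r)) atTop (𝓝 1) := by
    have h0 : Tendsto (fun t : ℝ => 1 + r / (t - r)) atTop (𝓝 (1 + 0)) :=
      tendsto_const_nhds.add (tendsto_const_nhds.div_atTop htr)
    refine Tendsto.congr' ?_ (by simpa using h0)
    filter_upwards [eventually_gt_atTop (r+1)] with t ht
    have h1 : t - r ≠ 0 := sub_ne_zero.mpr (by linarith)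
    field_simp
    ring
  have hP32 : Tendsto (fun t : ℝ => (t/(t-r)) ^ ((3:ℝ)/2)) atTop (𝓝 1) := by
    have hcont : ContinuousAt (fun s : ℝ => s ^ ((3:ℝ)/2)) 1 :=
      Real.continuousAt_rpow_const 1 _ (Or.inl one_ne_zero)
    have := hcont.tendsto.comp hP
    simpa [Function.comp_def, Real.one_rpow] using this
  have hlogt : Tendsto (fun t : ℝ => Real.log t / t) atTop (𝓝 0) := by
    simpa using Real.isLittleO_log_id_atTop.tendsto_div_nhds_zero
  have hcl : Tendsto (fun t : ℝ => c * Real.log t) atTop atTop :=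
    Real.tendsto_log_atTop.const_mul_atTop hc
  have hQ : Tendsto (fun t : ℝ => (x + c * Real.log t) / (c * Real.log t)) atTop (𝓝 1) := by
    have h0 : Tendsto (fun t : ℝ => x/(c*Real.log t) + 1) atTop (𝓝 (0+1)) :=
      (tendsto_const_nhds.div_atTop hcl).add tendsto_const_nhds
    refine Tendsto.congr' ?_ (by simpa using h0)
    filter_upwards [hcl.eventually_gt_atTop 0] with t ht
    have h1 : c * Real.log t ≠ 0 := ne_of_gt ht
    rw [div_add_one h1]
  have hxc : Tendsto (fun t : ℝ => x + c * Real.log t) atTop atTop :=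
    tendsto_atTop_add_const_left atTop x hcl
  -- the key product limit
  have hKa : Tendsto (fun t => K t * a t) atTop (𝓝 (2 / Real.sqrt (2*Real.pi))) := by
    have h0 : Tendsto (fun t : ℝ => 2 / Real.sqrt (2*Real.pi) *
        ((t/(t-r)) ^ ((3:ℝ)/2) * ((x + c*Real.log t)/(c*Real.log t)))) atTop
        (𝓝 (2/Real.sqrt (2*Real.pi) * (1*1))) := (hP32.mul hQ).const_mul _
    refine Tendsto.congr' ?_ (by simpa using h0)
    filter_upwards [eventually_gt_atTop (r+1), eventually_gt_atTop 1] with t ht1 ht2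
    have htr0 : (0:ℝ) < t - r := by linarith
    have ht0 : (0:ℝ) < t := by linarith
    have hlt : 0 < Real.log t := Real.log_pos ht2
    have hsp : Real.sqrt (2*Real.pi*(t-r)) = Real.sqrt (2*Real.pi) * Real.sqrt (t-r) :=
      Real.sqrt_mul (by positivity) _
    have hdiv : (t/(t-r)) ^ ((3:ℝ)/2) = t ^ ((3:ℝ)/2) / (t-r) ^ ((3:ℝ)/2) :=
      Real.div_rpow ht0.le htr0.le _
    have h32 : (t-r) ^ ((3:ℝ)/2) = (t-r) * Real.sqrt (t-r) := by
      rw [show ((3:ℝ)/2) = 1 + 1/2 by norm_num, Real.rpow_add htr0, Real.rpow_one,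
        ← Real.sqrt_eq_rpow]
    simp only [hK_def, ha_def]
    rw [hdiv, h32, hsp]
    have hs1 : Real.sqrt (2*Real.pi) ≠ 0 := by positivity
    have hs2 : Real.sqrt (t-r) ≠ 0 := by positivity
    field_simp
    rw [Real.sqrt_mul (by norm_num : (0:ℝ) ≤ 2)]
    ring
  have hlt1 : (2:ℝ) / Real.sqrt (2*Real.pi) < 1 := by
    rw [div_lt_one (by positivity)]
    exact (Real.lt_sqrt (by norm_num : (0:ℝ) ≤ 2)).mpr
      (by nlinarith [Real.pi_gt_three] : (2:ℝ)^2 < 2*Real.pi)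
  -- domination
  have hEvBound : ∀ᶠ t in atTop, ∀ᵐ y ∂(volume.restrict (Ioi (0:ℝ))),
      ‖φ t y‖ ≤ g y * (y * Real.exp (Real.sqrt 2 * y)) := by
    filter_upwards [eventually_gt_atTop (r+1), eventually_ge_atTop 1,
      hxc.eventually_gt_atTop 0, hKa.eventually (eventually_le_nhds hlt1)]
      with t ht1 ht2 hx3 hKa1
    rw [ae_restrict_iff' measurableSet_Ioi]
    refine ae_of_all _ fun y hy => ?_
    have hy0 : (0:ℝ) < y := hy
    have hg : 0 ≤ g y := hpos y hy0.le
    have htr0 : (0:ℝ) < t - r := by linarith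
    have hK0 : 0 ≤ K t := by
      simp only [hK_def]
      exact div_nonneg (div_nonneg (Real.rpow_nonneg (by linarith) _)
        (mul_nonneg hc.le (Real.log_nonneg ht2))) (Real.sqrt_nonneg _)
    have ha0 : 0 ≤ a t := by
      simp only [ha_def]
      exact div_nonneg (by nlinarith) htr0.le
    have hay : 0 ≤ a t * y := mul_nonneg ha0 hy0.le
    have hW0 : 0 ≤ 1 - Real.exp (-(a t * y)) := by
      have := Real.exp_le_one_iff.mpr (neg_nonpos.mpr hay)
      linarith
    have hW1 : 1 - Real.exp (-(a t * y)) ≤ a t * y := by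
      nlinarith [Real.add_one_le_exp (-(a t * y))]
    have hEg1 : Real.exp (-(x-y)^2/(2*(t-r))) ≤ 1 := by
      refine Real.exp_le_one_iff.mpr ?_
      exact div_nonpos_of_nonpos_of_nonneg (neg_nonpos.mpr (sq_nonneg _)) (by linarith)
    have hφ0 : 0 ≤ φ t y := by
      refine mul_nonneg hK0 (mul_nonneg (mul_nonneg (mul_nonneg hg (Real.exp_pos _).le)
        (Real.exp_pos _).le) hW0)
    rw [Real.norm_eq_abs, abs_of_nonneg hφ0]
    have hinner : g y * Real.exp (Real.sqrt 2 * y) * Real.exp (-(x-y)^2/(2*(t-r))) *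
        (1 - Real.exp (-(a t * y))) ≤
        g y * Real.exp (Real.sqrt 2 * y) * 1 * (a t * y) := by
      refine mul_le_mul ?_ hW1 hW0 ?_
      · exact mul_le_mul_of_nonneg_left hEg1 (mul_nonneg hg (Real.exp_pos _).le)
      · exact mul_nonneg (mul_nonneg hg (Real.exp_pos _).le) zero_le_one
    calc φ t y ≤ K t * (g y * Real.exp (Real.sqrt 2 * y) * 1 * (a t * y)) :=
          mul_le_mul_of_nonneg_left hinner hK0
      _ = (K t * a t) * (g y * (y * Real.exp (Real.sqrt 2 * y))) := by ring
      _ ≤ 1 * (g y * (y * Real.exp (Real.sqrt 2 * y))) :=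
          mul_le_mul_of_nonneg_right hKa1
            (mul_nonneg hg (mul_nonneg hy0.le (Real.exp_pos _).le))
      _ = g y * (y * Real.exp (Real.sqrt 2 * y)) := one_mul _
  -- a t → 0
  have ha0' : Tendsto a atTop (𝓝 0) := by
    have h1 : Tendsto (fun t : ℝ => 2*x/(t-r)) atTop (𝓝 0) :=
      tendsto_const_nhds.div_atTop htr
    have h2 : Tendsto (fun t : ℝ => 2*c*(Real.log t/t * (t/(t-r)))) atTop
        (𝓝 (2*c*(0*1))) := (hlogt.mul hP).const_mul _
    have h3 := h1.add h2
    refine Tendsto.congr' ?_ (by simpa using h3)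
    filter_upwards [eventually_gt_atTop (r+1), eventually_gt_atTop 1] with t ht1 ht2
    have h0 : t ≠ 0 := by intro h; rw [h] at ht2; linarith
    have h0' : t - r ≠ 0 := by intro h; nlinarith [sub_eq_zero.mp h]
    simp only [ha_def]
    field_simp
  have hane : ∀ᶠ t in atTop, 0 < a t := by
    filter_upwards [hxc.eventually_gt_atTop 0, eventually_gt_atTop (r+1)] with t h1 h2
    simp only [ha_def]
    exact div_pos (by nlinarith) (by linarith)
  -- pointwise limit
  have hlimae : ∀ᵐ y ∂(volume.restrict (Ioi (0:ℝ))), Tendsto (fun t => φ t y) atTop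
      (𝓝 (Real.sqrt (2/Real.pi) * (g y * (y * Real.exp (Real.sqrt 2 * y))))) := by
    rw [ae_restrict_iff' measurableSet_Ioi]
    refine ae_of_all _ fun y hy => ?_
    have hy0 : (0:ℝ) < y := hy
    have hEg : Tendsto (fun t : ℝ => Real.exp (-(x-y)^2/(2*(t-r)))) atTop (𝓝 1) := by
      have h1 : Tendsto (fun t : ℝ => -(x-y)^2/(2*(t-r))) atTop (𝓝 0) :=
        tendsto_const_nhds.div_atTop (htr.const_mul_atTop two_pos)
      have := (Real.continuous_exp.tendsto 0).comp h1
      simpa [Function.comp_def] using this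
    have hmul : Tendsto (fun t => a t * y) atTop (𝓝[≠] 0) := by
      refine tendsto_nhdsWithin_of_tendsto_nhds_of_eventually_within _
        (by simpa using ha0'.mul_const y) ?_
      filter_upwards [hane] with t ht
      exact Set.mem_compl_singleton_iff.mpr (mul_pos ht hy0).ne'
    have h3 : Tendsto (fun t => (1 - Real.exp (-(a t * y)))/(a t * y)) atTop (𝓝 1) := by
      have := auxSlope.comp hmul
      simpa [Function.comp_def] using this
    have hprod := (((hKa.mul_const y).const_mul
      (g y * Real.exp (Real.sqrt 2 * y))).mul hEg).mul h3
    have heq : (fun t => g y * Real.exp (Real.sqrt 2 * y) * (K t * a t * y) *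
        Real.exp (-(x-y)^2/(2*(t-r))) * ((1 - Real.exp (-(a t * y)))/(a t * y)))
        =ᶠ[atTop] fun t => φ t y := by
      filter_upwards [hane] with t ht
      have h0 : a t * y ≠ 0 := (mul_pos ht hy0).ne'
      simp only [hφ_def]
      field_simp
    have hfin := hprod.congr' heq
    have hval : g y * Real.exp (Real.sqrt 2 * y) * (2/Real.sqrt (2*Real.pi) * y) * 1 * 1 =
        Real.sqrt (2/Real.pi) * (g y * (y * Real.exp (Real.sqrt 2 * y))) := by
      rw [sqrtTwoDivPi]; ring
    rw [hval] at hfin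
    exact hfin
  -- measurability
  have hmeas' : ∀ᶠ t in atTop, AEStronglyMeasurable (φ t) (volume.restrict (Ioi (0:ℝ))) := by
    refine Eventually.of_forall fun t => Measurable.aestronglyMeasurable ?_
    simp only [hφ_def]
    fun_prop
  -- dominated convergence
  have hDCT : Tendsto (fun t => ∫ y in Ioi (0:ℝ), φ t y) atTop
      (𝓝 (∫ y in Ioi (0:ℝ),
        Real.sqrt (2/Real.pi) * (g y * (y * Real.exp (Real.sqrt 2 * y))))) :=
    tendsto_integral_filter_of_dominated_convergence _ hmeas' hEvBound hint hlimae
  have hfinal := hDCT.const_mul (Real.exp (-(Real.sqrt 2 * x)))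
  have hlimval : Real.exp (-(Real.sqrt 2 * x)) * ∫ y in Ioi (0:ℝ),
      Real.sqrt (2/Real.pi) * (g y * (y * Real.exp (Real.sqrt 2 * y))) =
      Real.sqrt (2/Real.pi) * (∫ y in Ioi (0:ℝ), g y * (y * Real.exp (Real.sqrt 2 * y))) *
      Real.exp (-(Real.sqrt 2 * x)) := by
    rw [integral_const_mul]; ring
  rw [hlimval] at hfinal
  refine hfinal.congr fun t => ?_
  -- pointwise equality of the two expressions
  simp only [PsiG, mFun, ← hc_def]
  conv_lhs => rw [← integral_const_mul]
  conv_rhs => rw [← integral_const_mul, ← integral_const_mul]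
  congr 1
  funext y
  simp only [hφ_def, hK_def, ha_def]
  have e1 : Real.sqrt 2 * (Real.sqrt 2 * t + x - Real.sqrt 2 * t) = Real.sqrt 2 * x := by ring
  have e2 : Real.sqrt 2 * t + x - Real.sqrt 2 * t - y = x - y := by ring
  have e3 : -(2 * (Real.sqrt 2 * t + x - (Real.sqrt 2 * t - c * Real.log t)) * y) / (t - r) =
      -(2 * (x + c * Real.log t) / (t - r) * y) := by ring
  rw [e1, e2, e3]
  ring
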